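/- (Theorem 3, deterministic guarantee of the doubly robust program.) Let h(y) = max_{1 ≤ j ≤ J}(a_j · y + b_j) and g(y) = max_{1 ≤ l ≤ L}(c_l · y + d_l) with a_j, c_l ∈ ℝ^d and b_j, d_l ∈ ℝ; set λ = max_j ‖a_j‖_∞ and θ = max_l ‖c_l‖_∞. Fix β ∈ (0, 1], points ŷ^1, …, ŷ^N ∈ ℝ^d, a radius ε ≥ 0, and reals s_1, …, s_N, q_1, …, q_N, t satisfying: (i) a_j · ŷ^i + b_j ≤ s_i for all i, j; (ii) θ ε + (1/N)Σ_{i=1}^N q_i ≤ t β; (iii) (c_l · ŷ^i + d_l + t)_+ ≤ q_i for all i, l. Then for every probability measure ℙ on ℝ^d with finite first moment satisfying d_W(ℙ, P̄) ≤ ε, where P̄ = (1/N)Σ_i δ_{ŷ^i}, it holds that (a) ∫ h dℙ ≤ λ ε + (1/N)Σ_{i=1}^N s_i, and (b) CVaR_{1−β}^{ℙ}(g) ≤ 0. -/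

import Mathlib

open MeasureTheory Matrix
open scoped ENNReal

/-- The ℓ¹-norm of a vector. -/
noncomputable def l1norm {ι : Type*} [Fintype ι] (v : ι → ℝ) : ℝ := ∑ i, |v i|

/-- The induced ℓ¹-norm of a matrix (maximum absolute column sum). -/
noncomputable def matL1 {ι κ : Type*} [Fintype ι] [Fintype κ] (M : Matrix ι κ ℝ) : ℝ :=
  ⨆ j, ∑ i, |M i j|

/-- The Wasserstein-1 distance (w.r.t. the ℓ¹-norm): infimum over couplings of the expected
ℓ¹-distance. -/
noncomputable def wass {ι : Type*} [Fintype ι] (P Q : Measure (ι → ℝ)) : ℝ :=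
  sInf { r | ∃ π : Measure ((ι → ℝ) × (ι → ℝ)),
    IsProbabilityMeasure π ∧ π.map Prod.fst = P ∧ π.map Prod.snd = Q ∧
    r = ∫ p, l1norm (p.1 - p.2) ∂π }

/-- The uniform empirical measure `(1/N) ∑ᵢ δ_{a i}`. -/
noncomputable def emp {ι : Type*} [Fintype ι] {N : ℕ} (a : Fin N → (ι → ℝ)) :
    Measure (ι → ℝ) :=
  (N : ℝ≥0∞)⁻¹ • ∑ i, Measure.dirac (a i)

/-- The block-downshift matrix `Z`, with `n × n` identity blocks on the first block
subdiagonal and zero blocks elsewhere. -/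
noncomputable def dshift (T n : ℕ) : Matrix (Fin (T+1) × Fin n) (Fin (T+1) × Fin n) ℝ :=
  fun p q => if (p.1 : ℕ) = (q.1 : ℕ) + 1 ∧ p.2 = q.2 then 1 else 0

/-- `blkdiag T M`: block-diagonal matrix with `T+1` copies of `M` on the diagonal. -/
noncomputable def blkdiag (T : ℕ) {n m : ℕ} (M : Matrix (Fin n) (Fin m) ℝ) :
    Matrix (Fin (T+1) × Fin n) (Fin (T+1) × Fin m) ℝ :=
  fun p q => if p.1 = q.1 then M p.2 q.2 else 0

/-- A block-partitioned matrix is block lower triangular: all blocks strictly above the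
block diagonal are zero. -/
def BlockLT {T n m : ℕ} (M : Matrix (Fin (T+1) × Fin m) (Fin (T+1) × Fin n) ℝ) : Prop :=
  ∀ p q, p.1 < q.1 → M p q = 0

/- ### Auxiliary lemmas -/

lemma l1norm_nonneg {ι : Type*} [Fintype ι] (v : ι → ℝ) : 0 ≤ l1norm v :=
  Finset.sum_nonneg fun _ _ => abs_nonneg _

lemma l1norm_sub_le {ι : Type*} [Fintype ι] (x y : ι → ℝ) :
    l1norm (x - y) ≤ l1norm x + l1norm y := by
  rw [l1norm, l1norm, l1norm, ← Finset.sum_add_distrib]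
  refine Finset.sum_le_sum fun k _ => ?_
  have : (x - y) k = x k - y k := rfl
  rw [this, sub_eq_add_neg]
  exact (abs_add_le _ _).trans (by rw [abs_neg])

lemma l1norm_continuous {ι : Type*} [Fintype ι] :
    Continuous (fun v : ι → ℝ => l1norm v) := by
  unfold l1norm
  exact continuous_finset_sum _ fun i _ => (continuous_apply i).abs

lemma integrable_dirac'' {α : Type*} [MeasurableSpace α] [MeasurableSingletonClass α]
    (f : α → ℝ) (x : α) : Integrable f (Measure.dirac x) := by
  have h : f =ᵐ[Measure.dirac x] fun _ => f x := by
    rw [MeasureTheory.ae_dirac_eq]; rfl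
  exact (integrable_const (f x)).congr h.symm

lemma integrable_emp {dd N : ℕ} (hN : 0 < N) (yhat : Fin N → Fin dd → ℝ)
    (f : (Fin dd → ℝ) → ℝ) : Integrable f (emp yhat) := by
  rw [emp]
  refine Integrable.smul_measure ?_ ?_
  · exact integrable_finset_sum_measure.mpr fun i _ => integrable_dirac'' f (yhat i)
  · exact ENNReal.inv_ne_top.mpr (by simp [hN.ne'])

lemma integral_emp {dd N : ℕ} (hN : 0 < N) (yhat : Fin N → Fin dd → ℝ)
    (f : (Fin dd → ℝ) → ℝ) :
    ∫ y, f y ∂(emp yhat) = (N : ℝ)⁻¹ * ∑ i, f (yhat i) := by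
  rw [emp, integral_smul_measure,
    integral_finset_sum_measure (fun i _ => integrable_dirac'' f (yhat i))]
  simp [integral_dirac, ENNReal.toReal_inv, smul_eq_mul]

lemma emp_prob {dd N : ℕ} (hN : 0 < N) (yhat : Fin N → Fin dd → ℝ) :
    IsProbabilityMeasure (emp yhat) := by
  constructor
  rw [emp]
  simp only [Measure.smul_apply, Measure.coe_finset_sum, Finset.sum_apply,
    Measure.dirac_apply_of_mem (Set.mem_univ _), smul_eq_mul]
  rw [Finset.sum_const, Finset.card_univ, Fintype.card_fin, nsmul_eq_mul, mul_one]
  rw [ENNReal.inv_mul_cancel (by simp [hN.ne']) (by simp)]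

/-- Key transport lemma: for an `M`-Lipschitz (w.r.t. ℓ¹) function with linear growth,
the integral under `P` is bounded via the empirical measure plus `M·ε`. -/
lemma key_transport {dd N : ℕ} (hN : 0 < N) (M C : ℝ) (hM : 0 ≤ M)
    (f : (Fin dd → ℝ) → ℝ) (hf : Continuous f)
    (hlip : ∀ x y, f x ≤ f y + M * l1norm (x - y))
    (hbd : ∀ y, |f y| ≤ M * l1norm y + C)
    (yhat : Fin N → Fin dd → ℝ) (ε : ℝ)
    (P : Measure (Fin dd → ℝ)) [IsProbabilityMeasure P]
    (hPmom : Integrable (fun v => l1norm v) P)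
    (hball : wass P (emp yhat) ≤ ε) :
    ∫ y, f y ∂P ≤ (N : ℝ)⁻¹ * ∑ i, f (yhat i) + M * ε := by
  haveI := emp_prob hN yhat
  set S := { r | ∃ π : Measure ((Fin dd → ℝ) × (Fin dd → ℝ)),
    IsProbabilityMeasure π ∧ π.map Prod.fst = P ∧ π.map Prod.snd = emp yhat ∧
    r = ∫ p, l1norm (p.1 - p.2) ∂π } with hS
  have hw : wass P (emp yhat) = sInf S := rfl
  have hfP : Integrable f P := by
    refine Integrable.mono' ((hPmom.const_mul M).add (integrable_const C))
      hf.aestronglyMeasurable (ae_of_all _ hbd)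
  have hfE : Integrable f (emp yhat) := integrable_emp hN yhat f
  -- against each coupling
  have hstep : ∀ r ∈ S, ∫ y, f y ∂P ≤ ∫ y, f y ∂(emp yhat) + M * r := by
    rintro r ⟨π, hπ, h1, h2, rfl⟩
    haveI := hπ
    have hmfst : AEMeasurable (Prod.fst : _ × _ → (Fin dd → ℝ)) π :=
      measurable_fst.aemeasurable
    have hmsnd : AEMeasurable (Prod.snd : (Fin dd → ℝ) × _ → (Fin dd → ℝ)) π :=
      measurable_snd.aemeasurable
    have l1fst : Integrable (fun p : (Fin dd → ℝ) × (Fin dd → ℝ) => l1norm p.1) π := by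
      have := (integrable_map_measure l1norm_continuous.aestronglyMeasurable hmfst).mp
        (by rwa [h1])
      exact this
    have l1snd : Integrable (fun p : (Fin dd → ℝ) × (Fin dd → ℝ) => l1norm p.2) π := by
      have := (integrable_map_measure l1norm_continuous.aestronglyMeasurable hmsnd).mp
        (by rw [h2]; exact integrable_emp hN yhat _)
      exact this
    have hcostcont : Continuous (fun p : (Fin dd → ℝ) × (Fin dd → ℝ) =>
        l1norm (p.1 - p.2)) := l1norm_continuous.comp (continuous_fst.sub continuous_snd)
    have hcost : Integrable (fun p : (Fin dd → ℝ) × (Fin dd → ℝ) =>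
        l1norm (p.1 - p.2)) π := by
      refine Integrable.mono' (l1fst.add l1snd) hcostcont.aestronglyMeasurable
        (ae_of_all _ fun p => ?_)
      simp only [Pi.add_apply, Real.norm_eq_abs]
      rw [abs_of_nonneg (l1norm_nonneg _)]
      exact l1norm_sub_le _ _
    have ffst : Integrable (fun p : (Fin dd → ℝ) × (Fin dd → ℝ) => f p.1) π := by
      have := (integrable_map_measure hf.aestronglyMeasurable hmfst).mp (by rwa [h1])
      exact this
    have fsnd : Integrable (fun p : (Fin dd → ℝ) × (Fin dd → ℝ) => f p.2) π := by
      have := (integrable_map_measure hf.aestronglyMeasurable hmsnd).mp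
        (by rw [h2]; exact hfE)
      exact this
    calc ∫ y, f y ∂P = ∫ p, f p.1 ∂π := by
          rw [← h1, integral_map hmfst (by rw [h1]; exact hf.aestronglyMeasurable)]
      _ ≤ ∫ p, (f p.2 + M * l1norm (p.1 - p.2)) ∂π := by
          refine integral_mono ffst (fsnd.add (hcost.const_mul M)) fun p => ?_
          exact hlip p.1 p.2
      _ = ∫ p, f p.2 ∂π + M * ∫ p, l1norm (p.1 - p.2) ∂π := by
          rw [integral_add fsnd (hcost.const_mul M), integral_const_mul]
      _ = ∫ y, f y ∂(emp yhat) + M * ∫ p, l1norm (p.1 - p.2) ∂π := by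
          rw [← h2, integral_map hmsnd (by rw [h2]; exact hf.aestronglyMeasurable)]
  -- nonempty set of couplings
  have hSne : S.Nonempty := by
    refine ⟨∫ p, l1norm (p.1 - p.2) ∂(P.prod (emp yhat)), P.prod (emp yhat),
      inferInstance, ?_, ?_, rfl⟩
    · rw [Measure.map_fst_prod, measure_univ, one_smul]
    · rw [Measure.map_snd_prod, measure_univ, one_smul]
  have hDinf : ∫ y, f y ∂P - ∫ y, f y ∂(emp yhat) ≤ M * sInf S := by
    rcases eq_or_lt_of_le hM with hM0 | hMpos
    · obtain ⟨r0, hr0⟩ := hSne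
      have h := hstep r0 hr0
      rw [← hM0] at h ⊢
      simp only [zero_mul] at h ⊢
      linarith
    · have hdiv : (∫ y, f y ∂P - ∫ y, f y ∂(emp yhat)) / M ≤ sInf S := by
        refine le_csInf hSne fun r hr => ?_
        have h := hstep r hr
        rw [div_le_iff₀ hMpos]
        calc ∫ y, f y ∂P - ∫ y, f y ∂(emp yhat) ≤ M * r := by linarith
          _ = r * M := mul_comm _ _
      have := (div_le_iff₀ hMpos).mp hdiv
      calc ∫ y, f y ∂P - ∫ y, f y ∂(emp yhat) ≤ sInf S * M := this
        _ = M * sInf S := mul_comm _ _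
  have hME : M * sInf S ≤ M * ε := by
    rw [← hw]
    exact mul_le_mul_of_nonneg_left hball hM
  have hEmp := integral_emp hN yhat f
  linarith

section maxaffine
variable {dd L : ℕ}

lemma theta_nonneg (c : Fin L → Fin dd → ℝ) : 0 ≤ ⨆ l, ⨆ k, |c l k| :=
  Real.iSup_nonneg fun _ => Real.iSup_nonneg fun _ => abs_nonneg _

lemma coef_le (hL : 0 < L) (c : Fin L → Fin dd → ℝ) (l : Fin L) (k : Fin dd) :
    |c l k| ≤ ⨆ l, ⨆ k, |c l k| := by
  haveI : Nonempty (Fin L) := ⟨⟨0, hL⟩⟩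
  haveI : Nonempty (Fin dd) := ⟨k⟩
  exact le_trans
    (le_ciSup (f := fun k => |c l k|) (Set.Finite.bddAbove (Set.finite_range _)) k)
    (le_ciSup (f := fun l => ⨆ k, |c l k|) (Set.Finite.bddAbove (Set.finite_range _)) l)

lemma dot_bound (hL : 0 < L) (c : Fin L → Fin dd → ℝ) (l : Fin L) (v : Fin dd → ℝ) :
    |∑ k, c l k * v k| ≤ (⨆ l, ⨆ k, |c l k|) * l1norm v := by
  calc |∑ k, c l k * v k| ≤ ∑ k, |c l k * v k| := Finset.abs_sum_le_sum_abs _ _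
    _ = ∑ k, |c l k| * |v k| := by simp [abs_mul]
    _ ≤ ∑ k, (⨆ l, ⨆ k, |c l k|) * |v k| :=
        Finset.sum_le_sum fun k _ =>
          mul_le_mul_of_nonneg_right (coef_le hL c l k) (abs_nonneg _)
    _ = (⨆ l, ⨆ k, |c l k|) * l1norm v := by rw [l1norm, ← Finset.mul_sum]

lemma maxaffine_lip (hL : 0 < L) (c : Fin L → Fin dd → ℝ) (e : Fin L → ℝ)
    (x y : Fin dd → ℝ) :
    (⨆ l, (∑ k, c l k * x k + e l)) ≤ (⨆ l, (∑ k, c l k * y k + e l))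
      + (⨆ l, ⨆ k, |c l k|) * l1norm (x - y) := by
  haveI : Nonempty (Fin L) := ⟨⟨0, hL⟩⟩
  refine ciSup_le fun l => ?_
  have h1 : ∑ k, c l k * x k - ∑ k, c l k * y k
      ≤ (⨆ l, ⨆ k, |c l k|) * l1norm (x - y) := by
    have he : ∑ k, c l k * x k - ∑ k, c l k * y k = ∑ k, c l k * ((x - y) k) := by
      rw [← Finset.sum_sub_distrib]
      refine Finset.sum_congr rfl fun k _ => ?_
      simp [Pi.sub_apply, mul_sub]
    rw [he]
    exact le_trans (le_abs_self _) (dot_bound hL c l (x - y))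
  have h2 : ∑ k, c l k * y k + e l ≤ ⨆ l, (∑ k, c l k * y k + e l) :=
    le_ciSup (f := fun l => ∑ k, c l k * y k + e l)
      (Set.Finite.bddAbove (Set.finite_range _)) l
  linarith

lemma maxaffine_abs (hL : 0 < L) (c : Fin L → Fin dd → ℝ) (e : Fin L → ℝ)
    (y : Fin dd → ℝ) :
    |⨆ l, (∑ k, c l k * y k + e l)|
      ≤ (⨆ l, ⨆ k, |c l k|) * l1norm y + (⨆ l, |e l|) := by
  haveI : Nonempty (Fin L) := ⟨⟨0, hL⟩⟩
  have hE : ∀ l, |e l| ≤ ⨆ l, |e l| := fun l =>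
    le_ciSup (f := fun l => |e l|) (Set.Finite.bddAbove (Set.finite_range _)) l
  rw [abs_le]
  constructor
  · refine le_trans ?_ (le_ciSup (f := fun l => ∑ k, c l k * y k + e l) (Set.Finite.bddAbove (Set.finite_range _)) (⟨0, hL⟩ : Fin L))
    have h1 := abs_le.mp (dot_bound hL c ⟨0, hL⟩ y)
    have h3 := neg_abs_le (e (⟨0, hL⟩ : Fin L))
    have h4 := hE (⟨0, hL⟩ : Fin L)
    linarith [h1.1]
  · refine ciSup_le fun l => ?_
    have h1 := (abs_le.mp (dot_bound hL c l y)).2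
    have h2 := le_abs_self (e l)
    have h3 := hE l
    linarith

lemma maxaffine_cont (hL : 0 < L) (c : Fin L → Fin dd → ℝ) (e : Fin L → ℝ) :
    Continuous (fun y : Fin dd → ℝ => ⨆ l, (∑ k, c l k * y k + e l)) := by
  haveI : Nonempty (Fin L) := ⟨⟨0, hL⟩⟩
  have hrw : (fun y : Fin dd → ℝ => ⨆ l, (∑ k, c l k * y k + e l))
      = fun y => Finset.univ.sup' Finset.univ_nonempty
          (fun l => ∑ k, c l k * y k + e l) := by
    funext y
    rw [Finset.sup'_univ_eq_ciSup]
  rw [hrw]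
  refine Continuous.finset_sup'_apply _ fun l _ => ?_
  exact (continuous_finset_sum _ fun k _ => continuous_const.mul (continuous_apply k)).add
    continuous_const

end maxaffine

/-- **Theorem 3, deterministic guarantee of the doubly robust program.**
If the auxiliary variables `sᵢ, qᵢ, t` satisfy the linear constraints of the doubly robust
program, then for every probability measure `ℙ` in the Wasserstein ball of radius `ε`
around the empirical measure: (a) `∫ h dℙ ≤ λε + (1/N)Σᵢ sᵢ`, and (b) `CVaR_{1−β}^ℙ(g) ≤ 0`. -/
theorem stmt17 {dd J L N : ℕ} (hJ : 0 < J) (hL : 0 < L) (hN : 0 < N)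
    (a : Fin J → Fin dd → ℝ) (b : Fin J → ℝ)
    (c : Fin L → Fin dd → ℝ) (e : Fin L → ℝ)
    (β : ℝ) (hβ0 : 0 < β) (hβ1 : β ≤ 1)
    (yhat : Fin N → Fin dd → ℝ) (ε : ℝ) (hε : 0 ≤ ε)
    (s q : Fin N → ℝ) (t : ℝ)
    (hi : ∀ i j, ∑ k, a j k * yhat i k + b j ≤ s i)
    (hii : (⨆ l, ⨆ k, |c l k|) * ε + (N : ℝ)⁻¹ * ∑ i, q i ≤ t * β)
    (hiii : ∀ i l, max (∑ k, c l k * yhat i k + e l + t) 0 ≤ q i)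
    (P : Measure (Fin dd → ℝ)) [IsProbabilityMeasure P]
    (hPmom : Integrable (fun v => l1norm v) P)
    (hball : wass P (emp yhat) ≤ ε) :
    (∫ y, (⨆ j, (∑ k, a j k * y k + b j)) ∂P
        ≤ (⨆ j, ⨆ k, |a j k|) * ε + (N : ℝ)⁻¹ * ∑ i, s i) ∧
    (⨅ t' : ℝ, β⁻¹ * ∫ y, max ((⨆ l, (∑ k, c l k * y k + e l)) + t') 0 ∂P - t') ≤ 0 := by
  haveI : Nonempty (Fin J) := ⟨⟨0, hJ⟩⟩
  haveI : Nonempty (Fin L) := ⟨⟨0, hL⟩⟩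
  have hNinv : (0:ℝ) ≤ (N : ℝ)⁻¹ := by positivity
  constructor
  · -- part (a)
    set M := ⨆ j, ⨆ k, |a j k| with hMdef
    have hkey := key_transport hN M (⨆ j, |b j|) (theta_nonneg a)
      (fun y => ⨆ j, (∑ k, a j k * y k + b j)) (maxaffine_cont hJ a b)
      (maxaffine_lip hJ a b) (maxaffine_abs hJ a b) yhat ε P hPmom hball
    have hsum : ∑ i, (⨆ j, (∑ k, a j k * yhat i k + b j)) ≤ ∑ i, s i :=
      Finset.sum_le_sum fun i _ => ciSup_le fun j => hi i j
    have := mul_le_mul_of_nonneg_left hsum hNinv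
    linarith
  · -- part (b)
    set θ := ⨆ l, ⨆ k, |c l k| with hθdef
    have hθ0 : 0 ≤ θ := theta_nonneg c
    set g := fun y : Fin dd → ℝ => ⨆ l, (∑ k, c l k * y k + e l) with hgdef
    set ψ := fun y : Fin dd → ℝ => max (g y + t) 0 with hψdef
    have hψlip : ∀ x y, ψ x ≤ ψ y + θ * l1norm (x - y) := by
      intro x y
      have hg := maxaffine_lip hL c e x y
      refine max_le ?_ ?_
      · have := le_max_left (g y + t) 0
        have hl1 : 0 ≤ l1norm (x - y) := l1norm_nonneg _
        simp only [hψdef]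
        have : g x + t ≤ (g y + t) + θ * l1norm (x - y) := by
          simp only [hgdef] at hg ⊢
          linarith
        refine this.trans ?_
        have := le_max_left (g y + t) 0
        linarith
      · exact add_nonneg (le_max_right _ _) (mul_nonneg hθ0 (l1norm_nonneg _))
    have hψabs : ∀ y, |ψ y| ≤ θ * l1norm y + ((⨆ l, |e l|) + |t|) := by
      intro y
      have h1 : |ψ y| = ψ y := abs_of_nonneg (le_max_right _ _)
      have h2 : ψ y ≤ |g y + t| := max_le (le_abs_self _) (abs_nonneg _)
      have h3 : |g y + t| ≤ |g y| + |t| := abs_add_le _ _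
      have h4 := maxaffine_abs hL c e y
      rw [h1]
      simp only [hψdef, hgdef]
      linarith [max_le (le_abs_self ((⨆ l, (∑ k, c l k * y k + e l)) + t)) (abs_nonneg ((⨆ l, (∑ k, c l k * y k + e l)) + t))]
    have hψcont : Continuous ψ :=
      ((maxaffine_cont hL c e).add continuous_const).max continuous_const
    have hkey := key_transport hN θ ((⨆ l, |e l|) + |t|) hθ0 ψ hψcont hψlip hψabs
      yhat ε P hPmom hball
    -- empirical bound
    have hqi : ∀ i, ψ (yhat i) ≤ q i := by
      intro i
      have hq0 : 0 ≤ q i := le_trans (le_max_right _ 0) (hiii i ⟨0, hL⟩)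
      have hsup : g (yhat i) + t ≤ q i := by
        have h : g (yhat i) ≤ q i - t := by
          refine ciSup_le fun l => ?_
          have h1 := hiii i l
          have h2 := le_max_left (∑ k, c l k * yhat i k + e l + t) 0
          linarith
        linarith
      exact max_le hsup hq0
    have hsum : ∑ i, ψ (yhat i) ≤ ∑ i, q i := Finset.sum_le_sum fun i _ => hqi i
    have hmul := mul_le_mul_of_nonneg_left hsum hNinv
    have hθε : θ * ε ≤ θ * ε := le_refl _
    have hint : ∫ y, ψ y ∂P ≤ t * β := by
      calc ∫ y, ψ y ∂P ≤ (N : ℝ)⁻¹ * ∑ i, ψ (yhat i) + θ * ε := hkey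
        _ ≤ (N : ℝ)⁻¹ * ∑ i, q i + θ * ε := by linarith
        _ ≤ t * β := by linarith
    have hFt : β⁻¹ * ∫ y, max ((⨆ l, (∑ k, c l k * y k + e l)) + t) 0 ∂P - t ≤ 0 := by
      have hintψ : ∫ y, max ((⨆ l, (∑ k, c l k * y k + e l)) + t) 0 ∂P = ∫ y, ψ y ∂P := rfl
      rw [hintψ]
      have hβinv : 0 ≤ β⁻¹ := by positivity
      have := mul_le_mul_of_nonneg_left hint hβinv
      have heq : β⁻¹ * (t * β) = t := by field_simp
      linarith
    by_cases hbdd : BddBelow (Set.range fun t' : ℝ =>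
        β⁻¹ * ∫ y, max ((⨆ l, (∑ k, c l k * y k + e l)) + t') 0 ∂P - t')
    · exact le_trans (ciInf_le hbdd t) hFt
    · rw [Real.iInf_of_not_bddBelow hbdd]
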